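/- Let I ⊆ k[x_1,...,x_n] be the initial squarefree lexsegment ideal generated in degree q determined by the monomial v = x_{j_1}···x_{j_q} with 2 ≤ j_1 < ... < j_q ≤ n, and set A_t = [j_t] \ {j_1,...,j_{t-1}} for 1 ≤ t ≤ q. Then I has the minimal primary decomposition I = (∩_{t=1}^q (x_i : i ∈ A_t)) ∩ (∩ P_{F^c}), where the second intersection runs over all F ⊆ [n] with |F| = q-1 and F ∩ A_t ≠ ∅ for all t, and P_{F^c} is the prime ideal generated by the variables x_i with i ∉ F. -/

import Mathlib

open MvPolynomial

variable {k : Type*} [Field k]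

/-- The squarefree monomial `x_F = ∏_{i ∈ F} x_i`. -/
noncomputable def sqMon (n : ℕ) (k : Type*) [Field k] (F : Finset (Fin n)) :
    MvPolynomial (Fin n) k :=
  ∏ i ∈ F, X i

/-- `x_F >_lex x_G` for squarefree monomials: at the smallest index where the supports
differ, the index belongs to `F`. -/
def sqGtLex {n : ℕ} (F G : Finset (Fin n)) : Prop :=
  ∃ a, a ∈ F ∧ a ∉ G ∧ ∀ b, b < a → (b ∈ F ↔ b ∈ G)

/-- `x_F ≥_lex x_G` for squarefree monomials. -/
def sqGeLex {n : ℕ} (F G : Finset (Fin n)) : Prop :=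
  F = G ∨ sqGtLex F G

/-- The squarefree lexsegment set `L(u,v)` of degree `q` (as a set of supports). -/
def sqLexSeg {n : ℕ} (q : ℕ) (u v : Finset (Fin n)) : Set (Finset (Fin n)) :=
  {w | w.card = q ∧ sqGeLex u w ∧ sqGeLex w v}

/-- The initial squarefree lexsegment set `L^i(v)` of degree `q`. -/
def sqLexSegInit {n : ℕ} (q : ℕ) (v : Finset (Fin n)) : Set (Finset (Fin n)) :=
  {w | w.card = q ∧ sqGeLex w v}

/-- The final squarefree lexsegment set `L^f(u)` of degree `q`. -/
def sqLexSegFinal {n : ℕ} (q : ℕ) (u : Finset (Fin n)) : Set (Finset (Fin n)) :=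
  {w | w.card = q ∧ sqGeLex u w}

/-- The squarefree monomial ideal generated by a set of supports. -/
noncomputable def sqIdeal (n : ℕ) (k : Type*) [Field k] (L : Set (Finset (Fin n))) :
    Ideal (MvPolynomial (Fin n) k) :=
  Ideal.span ((fun F => sqMon n k F) '' L)

/-- The monomial prime ideal `P_G` generated by the variables indexed by `G`. -/
noncomputable def varIdeal (n : ℕ) (k : Type*) [Field k] (G : Finset (Fin n)) :
    Ideal (MvPolynomial (Fin n) k) :=
  Ideal.span ((fun i => (X i : MvPolynomial (Fin n) k)) '' (G : Set (Fin n)))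

/-- The depth of `S/I`: the supremum of lengths of regular sequences on `S/I`
contained in the graded maximal ideal `(x_1, ..., x_n)`. -/
noncomputable def depthQ {n : ℕ} {k : Type*} [Field k]
    (I : Ideal (MvPolynomial (Fin n) k)) : ℕ :=
  sSup {r | ∃ rs : List (MvPolynomial (Fin n) k), rs.length = r ∧
    (∀ x ∈ rs, x ∈ Ideal.span (Set.range (X : Fin n → MvPolynomial (Fin n) k))) ∧
    RingTheory.Sequence.IsRegular (MvPolynomial (Fin n) k ⧸ I) rs}

/-- A face of the Stanley–Reisner complex of the squarefree monomial ideal `I`. -/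
def isFace {n : ℕ} (k : Type*) [Field k] (I : Ideal (MvPolynomial (Fin n) k))
    (F : Finset (Fin n)) : Prop :=
  sqMon n k F ∉ I

/-- A facet (maximal face) of the Stanley–Reisner complex of `I`. -/
def isFacet {n : ℕ} (k : Type*) [Field k] (I : Ideal (MvPolynomial (Fin n) k))
    (F : Finset (Fin n)) : Prop :=
  isFace k I F ∧ ∀ G, F ⊂ G → ¬ isFace k I G
namespace Stmt10Aux

noncomputable def ind {n : ℕ} (F : Finset (Fin n)) : Fin n →₀ ℕ :=
  ∑ i ∈ F, Finsupp.single i 1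

lemma ind_apply {n : ℕ} (F : Finset (Fin n)) (i : Fin n) :
    ind F i = if i ∈ F then 1 else 0 := by
  classical
  simp [ind, Finsupp.finset_sum_apply, Finsupp.single_apply]

lemma ind_le_iff {n : ℕ} (F : Finset (Fin n)) (m : Fin n →₀ ℕ) :
    ind F ≤ m ↔ ∀ i ∈ F, m i ≠ 0 := by
  rw [Finsupp.le_def]
  constructor
  · intro h i hi
    have := h i
    rw [ind_apply, if_pos hi] at this
    omega
  · intro h i
    rw [ind_apply]
    split
    · next hi => have := h i hi; omega
    · exact Nat.zero_le _

lemma sqMon_eq {n : ℕ} (k : Type*) [Field k] (F : Finset (Fin n)) :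
    sqMon n k F = monomial (ind F) 1 := by
  classical
  induction F using Finset.induction with
  | empty => simp [sqMon, ind]
  | insert a F h ih =>
    have h1 : sqMon n k (insert a F) = X a * sqMon n k F := by
      rw [sqMon, sqMon, Finset.prod_insert h]
    have h2 : ind (insert a F) = Finsupp.single a 1 + ind F := by
      rw [ind, ind, Finset.sum_insert h]
    rw [h1, ih, h2, X, monomial_mul, one_mul]

lemma mem_sqIdeal {n : ℕ} (k : Type*) [Field k] (L : Set (Finset (Fin n)))
    (f : MvPolynomial (Fin n) k) :
    f ∈ sqIdeal n k L ↔ ∀ m ∈ f.support, ∃ F ∈ L, ∀ i ∈ F, m i ≠ 0 := by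
  have himg : (fun F => sqMon n k F) '' L = (fun s => monomial s (1 : k)) '' (ind '' L) := by
    rw [Set.image_image]
    exact Set.image_congr fun F _ => sqMon_eq k F
  rw [sqIdeal, himg, mem_ideal_span_monomial_image]
  constructor
  · intro h m hm
    obtain ⟨s, hs, hle⟩ := h m hm
    obtain ⟨F, hF, rfl⟩ := hs
    exact ⟨F, hF, (ind_le_iff F m).mp hle⟩
  · intro h m hm
    obtain ⟨F, hF, hle⟩ := h m hm
    exact ⟨ind F, ⟨F, hF, rfl⟩, (ind_le_iff F m).mpr hle⟩

lemma mem_varIdeal {n : ℕ} (k : Type*) [Field k] (G : Finset (Fin n))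
    (f : MvPolynomial (Fin n) k) :
    f ∈ varIdeal n k G ↔ ∀ m ∈ f.support, ∃ i ∈ G, m i ≠ 0 := by
  rw [varIdeal]
  exact mem_ideal_span_X_image

def Aset {n q : ℕ} (j : Fin q → Fin n) (t : Fin q) : Finset (Fin n) :=
  (Finset.univ.filter (fun i : Fin n => i ≤ j t)) \
    (Finset.image j (Finset.univ.filter (fun r : Fin q => r < t)))

lemma mem_Aset {n q : ℕ} {j : Fin q → Fin n} {t : Fin q} {i : Fin n} :
    i ∈ Aset j t ↔ i ≤ j t ∧ ∀ r, r < t → j r ≠ i := by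
  simp only [Aset, Finset.mem_sdiff, Finset.mem_filter, Finset.mem_univ, true_and,
    Finset.mem_image, not_exists, not_and]

lemma core {n q : ℕ} (hq : 0 < q) (j : Fin q → Fin n) (hmono : StrictMono j)
    (S : Finset (Fin n)) :
    (∃ F ∈ sqLexSegInit q (Finset.image j Finset.univ), ∀ i ∈ F, i ∈ S) ↔
      ((∀ t : Fin q, ∃ i ∈ Aset j t, i ∈ S) ∧
       ∀ F : Finset (Fin n), F.card = q - 1 → (∀ t, (F ∩ Aset j t).Nonempty) →
         ∃ i ∈ Fᶜ, i ∈ S) := by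
  classical
  have hjA : ∀ t, j t ∈ Aset j t := by
    intro t
    rw [mem_Aset]
    exact ⟨le_refl _, fun r hr hjr => absurd (hmono.injective hjr) (ne_of_lt hr)⟩
  constructor
  · rintro ⟨F, ⟨hcard, hge⟩, hFS⟩
    refine ⟨?_, ?_⟩
    · intro t
      rcases hge with rfl | ⟨a, haF, haV, hagree⟩
      · exact ⟨j t, hjA t, hFS _ (Finset.mem_image_of_mem j (Finset.mem_univ t))⟩
      · by_cases h : a ≤ j t
        · refine ⟨a, ?_, hFS a haF⟩
          rw [mem_Aset]
          exact ⟨h, fun r _ hjr =>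
            haV (hjr ▸ Finset.mem_image_of_mem j (Finset.mem_univ r))⟩
        · push_neg at h
          have hjF : j t ∈ F :=
            (hagree (j t) h).mpr (Finset.mem_image_of_mem j (Finset.mem_univ t))
          exact ⟨j t, hjA t, hFS _ hjF⟩
    · intro F' hc _
      have hns : ¬ F ⊆ F' := by
        intro hsub
        have := Finset.card_le_card hsub
        omega
      obtain ⟨i, hiF, hiF'⟩ := Finset.not_subset.mp hns
      exact ⟨i, Finset.mem_compl.mpr hiF', hFS i hiF⟩
  · rintro ⟨h1, h2⟩
    have hqn : q ≤ n := by
      simpa using Fintype.card_le_of_injective j hmono.injective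
    have hScard : q ≤ S.card := by
      by_contra h
      push_neg at h
      obtain ⟨F, hSF, hFcard⟩ := Finset.exists_superset_card_eq (s := S) (n := q - 1)
        (by omega) (by rw [Fintype.card_fin]; omega)
      obtain ⟨i, hic, hiS⟩ := h2 F hFcard (fun t => by
        obtain ⟨i, hiA, hiS⟩ := h1 t
        exact ⟨i, Finset.mem_inter.mpr ⟨hSF hiS, hiA⟩⟩)
      exact (Finset.mem_compl.mp hic) (hSF hiS)
    set iso := S.orderIsoOfFin rfl with hiso
    set e : Fin q → Fin n := fun t => (iso (Fin.castLE hScard t) : Fin n) with he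
    have hemono : StrictMono e := by
      intro a b hab
      exact Subtype.coe_lt_coe.mpr (iso.strictMono (by simpa using hab))
    have heS : ∀ t, e t ∈ S := fun t => (iso _).2
    have hinv : ∀ s ∈ S, ∀ t : Fin q, s < e t → ∃ r : Fin q, r < t ∧ e r = s := by
      intro s hs t hst
      set r' := iso.symm ⟨s, hs⟩ with hr'
      have hsr : (iso r' : Fin n) = s := by simp [hr']
      have hlt : r' < Fin.castLE hScard t := by
        rw [← OrderIso.lt_iff_lt iso]
        exact Subtype.coe_lt_coe.mp (by rw [hsr]; exact hst)
      have hvq : (r' : ℕ) < q := lt_of_lt_of_le hlt (by simp)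
      refine ⟨⟨r', hvq⟩, hlt, ?_⟩
      have : Fin.castLE hScard ⟨r', hvq⟩ = r' := by ext; rfl
      rw [he]
      simp only [this]
      exact hsr
    have hkey : ∀ t : Fin q, (∀ r, r < t → e r = j r) → e t ≤ j t := by
      intro t hbelow
      by_contra h
      push_neg at h
      obtain ⟨i, hiA, hiS⟩ := h1 t
      rw [mem_Aset] at hiA
      have hilt : i < e t := lt_of_le_of_lt hiA.1 h
      obtain ⟨r, hrt, hre⟩ := hinv i hiS t hilt
      exact hiA.2 r hrt (by rw [← hbelow r hrt, hre])
    by_cases hall : ∀ t, e t = j t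
    · refine ⟨Finset.image j Finset.univ, ⟨?_, Or.inl rfl⟩, ?_⟩
      · rw [Finset.card_image_of_injective _ hmono.injective, Finset.card_univ,
          Fintype.card_fin]
      · intro i hi
        obtain ⟨t, -, rfl⟩ := Finset.mem_image.mp hi
        rw [← hall t]; exact heS t
    · push_neg at hall
      set T := Finset.univ.filter (fun t => e t ≠ j t) with hT
      have hTne : T.Nonempty := by
        obtain ⟨t, ht⟩ := hall
        exact ⟨t, by simp [hT, ht]⟩
      set t₀ := T.min' hTne with ht₀
      have hmem : e t₀ ≠ j t₀ := (Finset.mem_filter.mp (T.min'_mem hTne)).2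
      have hbelow : ∀ r, r < t₀ → e r = j r := by
        intro r hr
        by_contra hne
        exact absurd (T.min'_le r (by simp [hT, hne])) (not_le.mpr hr)
      have hlt : e t₀ < j t₀ := lt_of_le_of_ne (hkey t₀ hbelow) hmem
      refine ⟨Finset.image e Finset.univ, ⟨?_, Or.inr ⟨e t₀, ?_, ?_, ?_⟩⟩, ?_⟩
      · rw [Finset.card_image_of_injective _ hemono.injective, Finset.card_univ,
          Fintype.card_fin]
      · exact Finset.mem_image_of_mem e (Finset.mem_univ t₀)
      · intro hmem'
        obtain ⟨s, -, hs⟩ := Finset.mem_image.mp hmem'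
        have hst : s < t₀ := hmono.lt_iff_lt.mp (by rw [hs]; exact hlt)
        have hes : e s = e t₀ := by rw [hbelow s hst, hs]
        exact absurd (hemono.injective hes) (ne_of_lt hst)
      · intro b hb
        constructor
        · intro hbW
          obtain ⟨r, -, rfl⟩ := Finset.mem_image.mp hbW
          have hrlt : r < t₀ := hemono.lt_iff_lt.mp hb
          rw [hbelow r hrlt]
          exact Finset.mem_image_of_mem j (Finset.mem_univ r)
        · intro hbV
          obtain ⟨s, -, rfl⟩ := Finset.mem_image.mp hbV
          have hslt : s < t₀ := hmono.lt_iff_lt.mp (lt_trans hb hlt)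
          rw [← hbelow s hslt]
          exact Finset.mem_image_of_mem e (Finset.mem_univ s)
      · intro i hi
        obtain ⟨t, -, rfl⟩ := Finset.mem_image.mp hi
        exact heS t

end Stmt10Aux

/-- minimal primary decomposition of an initial squarefree lexsegment ideal.
Here the variables are indexed `0, ..., n-1` (so `x_1` corresponds to index `0`), the
monomial `v = x_{j_1} ⋯ x_{j_q}` is given by the strictly increasing map `j`, the
hypothesis `1 ≤ j 0` encodes `2 ≤ j_1`, and `A t = [j_t] \ {j_1, ..., j_{t-1}}`. -/
theorem stmt10 {k : Type*} [Field k] (n q : ℕ) (hq : 0 < q) (j : Fin q → Fin n)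
    (hmono : StrictMono j) (hj1 : 1 ≤ ((j ⟨0, hq⟩ : Fin n) : ℕ)) :
    sqIdeal n k (sqLexSegInit q (Finset.image j Finset.univ)) =
      (⨅ t : Fin q, varIdeal n k
          ((Finset.univ.filter (fun i : Fin n => i ≤ j t)) \
            (Finset.image j (Finset.univ.filter (fun r : Fin q => r < t))))) ⊓
      (⨅ F ∈ {F : Finset (Fin n) | F.card = q - 1 ∧ ∀ t : Fin q,
          (F ∩ ((Finset.univ.filter (fun i : Fin n => i ≤ j t)) \
            (Finset.image j (Finset.univ.filter (fun r : Fin q => r < t))))).Nonempty},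
        varIdeal n k Fᶜ) := by
  classical
  have hAset : ∀ t : Fin q,
      (Finset.univ.filter (fun i : Fin n => i ≤ j t)) \
        (Finset.image j (Finset.univ.filter (fun r : Fin q => r < t))) =
      Stmt10Aux.Aset j t := fun t => rfl
  have key : ∀ m : Fin n →₀ ℕ,
      (∃ F ∈ sqLexSegInit q (Finset.image j Finset.univ), ∀ i ∈ F, m i ≠ 0) ↔
        ((∀ t : Fin q, ∃ i ∈ Stmt10Aux.Aset j t, m i ≠ 0) ∧
         ∀ F : Finset (Fin n), F.card = q - 1 →
           (∀ t, (F ∩ Stmt10Aux.Aset j t).Nonempty) → ∃ i ∈ Fᶜ, m i ≠ 0) := by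
    intro m
    have := Stmt10Aux.core hq j hmono m.support
    simpa [Finsupp.mem_support_iff] using this
  ext f
  rw [Stmt10Aux.mem_sqIdeal]
  simp only [Ideal.mem_inf, Ideal.mem_iInf, Stmt10Aux.mem_varIdeal, Set.mem_setOf_eq, hAset]
  constructor
  · intro h
    constructor
    · intro t m hm
      exact ((key m).mp (h m hm)).1 t
    · intro F hF m hm
      exact ((key m).mp (h m hm)).2 F hF.1 hF.2
  · rintro ⟨h1, h2⟩ m hm
    exact (key m).mpr ⟨fun t => h1 t m hm, fun F hc hmeet => h2 F ⟨hc, hmeet⟩ m hm⟩
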